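/- arXiv:gr-qc/9709052 — 2 statements merged into one kernel-verified Lean document; each statement's English description precedes it below -/
import Mathlib

section
/- If E₁, E₂, E₃ ∈ ℝ³ (identified with bivectors) arise as E₁ = e₂ × e₃, E₂ = e₃ × e₁, E₃ = e₁ × e₂ for linearly independent e₁, e₂, e₃, then the eᵢ are determined by the Eᵢ up to the simultaneous sign change eᵢ ↦ −eᵢ; that is, if eᵢ and eᵢ' are both linearly independent triples giving the same Eᵢ, then either eᵢ' = eᵢ for all i or eᵢ' = −eᵢ for all i. -/
open Matrix

lemma cross_cross_aux (u v w : Fin 3 → ℝ) :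
    (w ⨯₃ u) ⨯₃ (u ⨯₃ v) = (u ⬝ᵥ v ⨯₃ w) • u := by
  funext i
  fin_cases i <;>
    simp [crossProduct, dotProduct, Fin.sum_univ_three] <;> ring

lemma det_ne_zero_of_li (a b c : Fin 3 → ℝ) (h : LinearIndependent ℝ ![a, b, c]) :
    a ⬝ᵥ b ⨯₃ c ≠ 0 := by
  rw [triple_product_eq_det]
  have : LinearIndependent ℝ (fun i => (Matrix.of ![a, b, c]) i) := h
  have hu : IsUnit (Matrix.of ![a, b, c]) :=
    (Matrix.linearIndependent_rows_iff_isUnit).mp this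
  have := (Matrix.isUnit_iff_isUnit_det _).mp hu
  exact this.ne_zero

/-- If two linearly independent triples `e₁,e₂,e₃` and `e₁',e₂',e₃'` in `ℝ³` give the
same face bivectors `E₁ = e₂ × e₃`, `E₂ = e₃ × e₁`, `E₃ = e₁ × e₂`, then either
`eᵢ' = eᵢ` for all `i` or `eᵢ' = −eᵢ` for all `i`. -/
theorem triple_determined_by_cross_products_up_to_parity
    (e₁ e₂ e₃ e₁' e₂' e₃' : Fin 3 → ℝ)
    (h : LinearIndependent ℝ ![e₁, e₂, e₃])
    (h' : LinearIndependent ℝ ![e₁', e₂', e₃'])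
    (h1 : e₂' ⨯₃ e₃' = e₂ ⨯₃ e₃)
    (h2 : e₃' ⨯₃ e₁' = e₃ ⨯₃ e₁)
    (h3 : e₁' ⨯₃ e₂' = e₁ ⨯₃ e₂) :
    (e₁' = e₁ ∧ e₂' = e₂ ∧ e₃' = e₃) ∨ (e₁' = -e₁ ∧ e₂' = -e₂ ∧ e₃' = -e₃) := by
  set V : ℝ := e₁ ⬝ᵥ e₂ ⨯₃ e₃ with hV
  set V' : ℝ := e₁' ⬝ᵥ e₂' ⨯₃ e₃' with hV'
  have hVne : V ≠ 0 := det_ne_zero_of_li _ _ _ h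
  have hV'ne : V' ≠ 0 := det_ne_zero_of_li _ _ _ h'
  -- key identities: (e₃×e₁) ⨯₃ (e₁×e₂) = V • e₁ etc.
  have k1 : V' • e₁' = V • e₁ := by
    have a := cross_cross_aux e₁ e₂ e₃
    have b := cross_cross_aux e₁' e₂' e₃'
    rw [h2, h3] at b
    rw [← a, ← b]
  have k2 : V' • e₂' = V • e₂ := by
    have a := cross_cross_aux e₂ e₃ e₁
    have b := cross_cross_aux e₂' e₃' e₁'
    rw [h3, h1] at b
    rw [← triple_product_permutation e₁ e₂ e₃] at a
    rw [← triple_product_permutation e₁' e₂' e₃'] at b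
    rw [← hV] at a
    rw [← hV'] at b
    rw [← a, ← b]
  have k3 : V' • e₃' = V • e₃ := by
    have a := cross_cross_aux e₃ e₁ e₂
    have b := cross_cross_aux e₃' e₁' e₂'
    rw [h1, h2] at b
    rw [← triple_product_permutation e₂ e₃ e₁, ← triple_product_permutation e₁ e₂ e₃] at a
    rw [← triple_product_permutation e₂' e₃' e₁', ← triple_product_permutation e₁' e₂' e₃'] at b
    rw [← hV] at a
    rw [← hV'] at b
    rw [← a, ← b]
  -- V'^2 = V^2
  have hsq : V' * V' = V * V := by
    have t := congrArg (fun v => v ⬝ᵥ (e₂ ⨯₃ e₃)) k1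
    simp only [smul_dotProduct, smul_eq_mul] at t
    have hX : e₁' ⬝ᵥ e₂ ⨯₃ e₃ = V' := by rw [← h1]
    rw [hX, hV] at t
    exact t
  have hcases : V' = V ∨ V' = -V := mul_self_eq_mul_self_iff.mp hsq
  rcases hcases with hc | hc
  · left
    rw [hc] at k1 k2 k3
    exact ⟨smul_right_injective (Fin 3 → ℝ) hVne k1,
      smul_right_injective (Fin 3 → ℝ) hVne k2,
      smul_right_injective (Fin 3 → ℝ) hVne k3⟩
  · right
    rw [hc] at k1 k2 k3
    refine ⟨?_, ?_, ?_⟩ <;>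
      · apply smul_right_injective (Fin 3 → ℝ) hVne
        simp only [smul_neg]
        first
        | rw [← k1]; module
        | rw [← k2]; module
        | rw [← k3]; module
end

section
/- Let v₁,…,v₄ and w₁,…,w₄ be two bases of ℝ⁴ with v_a ∧ v_b = w_a ∧ w_b for all a, b. Then w_a = v_a for all a or w_a = −v_a for all a. -/
open ExteriorAlgebra

lemma detFour (A : Matrix (Fin 4) (Fin 4) ℝ) : A.det =
    A 0 0 * (A 1 1 * (A 2 2 * A 3 3 - A 2 3 * A 3 2) - A 1 2 * (A 2 1 * A 3 3 - A 2 3 * A 3 1)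
      + A 1 3 * (A 2 1 * A 3 2 - A 2 2 * A 3 1))
  - A 0 1 * (A 1 0 * (A 2 2 * A 3 3 - A 2 3 * A 3 2) - A 1 2 * (A 2 0 * A 3 3 - A 2 3 * A 3 0)
      + A 1 3 * (A 2 0 * A 3 2 - A 2 2 * A 3 0))
  + A 0 2 * (A 1 0 * (A 2 1 * A 3 3 - A 2 3 * A 3 1) - A 1 1 * (A 2 0 * A 3 3 - A 2 3 * A 3 0)
      + A 1 3 * (A 2 0 * A 3 1 - A 2 1 * A 3 0))
  - A 0 3 * (A 1 0 * (A 2 1 * A 3 2 - A 2 2 * A 3 1) - A 1 1 * (A 2 0 * A 3 2 - A 2 2 * A 3 0)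
      + A 1 2 * (A 2 0 * A 3 1 - A 2 1 * A 3 0)) := by
  rw [show A = Matrix.of ![![A 0 0, A 0 1, A 0 2, A 0 3], ![A 1 0, A 1 1, A 1 2, A 1 3],
      ![A 2 0, A 2 1, A 2 2, A 2 3], ![A 3 0, A 3 1, A 3 2, A 3 3]] from by
    ext i j; fin_cases i <;> fin_cases j <;> rfl]
  simp [Matrix.det_succ_row_zero, Fin.sum_univ_succ, show ((2:Fin 3).succAbove 2 = 3) from rfl,
    show (Fin.castSucc (2:Fin 3) = 2) from rfl, show ((1:Fin 3).succAbove 2 = 3) from rfl,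
    show ((1:Fin 4).succAbove 2 = 3) from rfl, show ((2:Fin 4).succAbove 2 = 3) from rfl,
    show ((3:Fin 4).succAbove (2:Fin 3) = 2) from rfl]
  ring

noncomputable def phiOf (D : (Fin 4 → ℝ) [⋀^Fin 4]→ₗ[ℝ] ℝ) :
    ExteriorAlgebra ℝ (Fin 4 → ℝ) →ₗ[ℝ] ℝ :=
  liftAlternating (Function.update (fun i => (0 : (Fin 4 → ℝ) [⋀^Fin i]→ₗ[ℝ] ℝ)) 4 D)

theorem phiOf_apply (D : (Fin 4 → ℝ) [⋀^Fin 4]→ₗ[ℝ] ℝ) (x y z t : Fin 4 → ℝ) :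
    phiOf D (ι ℝ x * ι ℝ y * ι ℝ z * ι ℝ t) = D ![x, y, z, t] := by
  have : ι ℝ x * ι ℝ y * ι ℝ z * ι ℝ t = ιMulti ℝ 4 ![x, y, z, t] := by
    simp [ιMulti_apply, List.ofFn_succ, mul_assoc]
  rw [this, phiOf, liftAlternating_apply_ιMulti, Function.update_self]

set_option maxHeartbeats 2000000 in
/-- If `v₁,…,v₄` and `w₁,…,w₄` are two bases of `ℝ⁴` with `v_a ∧ v_b = w_a ∧ w_b`
for all `a, b`, then `w_a = v_a` for all `a`, or `w_a = −v_a` for all `a`. -/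
theorem basis_determined_by_bivectors_up_to_parity
    (v w : Fin 4 → (Fin 4 → ℝ))
    (hv : LinearIndependent ℝ v) (hw : LinearIndependent ℝ w)
    (h : ∀ a b, ExteriorAlgebra.ι ℝ (v a) * ExteriorAlgebra.ι ℝ (v b)
        = ExteriorAlgebra.ι ℝ (w a) * ExteriorAlgebra.ι ℝ (w b)) :
    (∀ a, w a = v a) ∨ (∀ a, w a = - v a) := by
  classical
  have hcard : Fintype.card (Fin 4) = Module.finrank ℝ (Fin 4 → ℝ) := by simp
  set bv := basisOfLinearIndependentOfCardEqFinrank hv hcard with hbvdef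
  have hbv : ∀ i, v i = bv i := fun i =>
    (congrFun (coe_basisOfLinearIndependentOfCardEqFinrank hv hcard) i).symm
  -- key identity 1
  have key1 : ∀ a b c, bv.det ![w a, bv a, bv b, bv c] = 0 := by
    intro a b c
    have e : ι ℝ (w a) * ι ℝ (bv a) * ι ℝ (bv b) * ι ℝ (bv c) = 0 := by
      rw [← hbv a, ← hbv b, ← hbv c, mul_assoc (ι ℝ (w a)), h a b,
        ← mul_assoc (ι ℝ (w a)) (ι ℝ (w a)) (ι ℝ (w b)), ι_sq_zero, zero_mul, zero_mul]
    have := phiOf_apply bv.det (w a) (bv a) (bv b) (bv c)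
    rw [e, map_zero] at this
    exact this.symm
  -- key identity 2
  have key2 : ∀ a b c d, bv.det ![w a, w b, bv c, bv d] = bv.det ![bv a, bv b, bv c, bv d] := by
    intro a b c d
    have e : ι ℝ (w a) * ι ℝ (w b) * ι ℝ (bv c) * ι ℝ (bv d)
        = ι ℝ (bv a) * ι ℝ (bv b) * ι ℝ (bv c) * ι ℝ (bv d) := by
      rw [← hbv a, ← hbv b, ← hbv c, ← hbv d, h a b]
    have t1 := phiOf_apply bv.det (w a) (w b) (bv c) (bv d)
    have t2 := phiOf_apply bv.det (bv a) (bv b) (bv c) (bv d)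
    rw [← t1, ← t2, e]
  -- coordinate zero facts
  have z01 : bv.repr (w 0) 1 = 0 := by
    have := key1 0 2 3; rw [Module.Basis.det_apply, detFour] at this
    simpa [Module.Basis.toMatrix_apply, Finsupp.single_apply] using this
  have z02 : bv.repr (w 0) 2 = 0 := by
    have := key1 0 1 3; rw [Module.Basis.det_apply, detFour] at this
    simpa [Module.Basis.toMatrix_apply, Finsupp.single_apply] using this
  have z03 : bv.repr (w 0) 3 = 0 := by
    have := key1 0 1 2; rw [Module.Basis.det_apply, detFour] at this
    simpa [Module.Basis.toMatrix_apply, Finsupp.single_apply] using this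
  have z10 : bv.repr (w 1) 0 = 0 := by
    have := key1 1 2 3; rw [Module.Basis.det_apply, detFour] at this
    simpa [Module.Basis.toMatrix_apply, Finsupp.single_apply] using this
  have z12 : bv.repr (w 1) 2 = 0 := by
    have := key1 1 0 3; rw [Module.Basis.det_apply, detFour] at this
    simpa [Module.Basis.toMatrix_apply, Finsupp.single_apply] using this
  have z13 : bv.repr (w 1) 3 = 0 := by
    have := key1 1 0 2; rw [Module.Basis.det_apply, detFour] at this
    simpa [Module.Basis.toMatrix_apply, Finsupp.single_apply] using this
  have z20 : bv.repr (w 2) 0 = 0 := by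
    have := key1 2 1 3; rw [Module.Basis.det_apply, detFour] at this
    simpa [Module.Basis.toMatrix_apply, Finsupp.single_apply] using this
  have z21 : bv.repr (w 2) 1 = 0 := by
    have := key1 2 0 3; rw [Module.Basis.det_apply, detFour] at this
    simpa [Module.Basis.toMatrix_apply, Finsupp.single_apply] using this
  have z23 : bv.repr (w 2) 3 = 0 := by
    have := key1 2 0 1; rw [Module.Basis.det_apply, detFour] at this
    simpa [Module.Basis.toMatrix_apply, Finsupp.single_apply] using this
  have z30 : bv.repr (w 3) 0 = 0 := by
    have := key1 3 1 2; rw [Module.Basis.det_apply, detFour] at this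
    simpa [Module.Basis.toMatrix_apply, Finsupp.single_apply] using this
  have z31 : bv.repr (w 3) 1 = 0 := by
    have := key1 3 0 2; rw [Module.Basis.det_apply, detFour] at this
    simpa [Module.Basis.toMatrix_apply, Finsupp.single_apply] using this
  have z32 : bv.repr (w 3) 2 = 0 := by
    have := key1 3 0 1; rw [Module.Basis.det_apply, detFour] at this
    simpa [Module.Basis.toMatrix_apply, Finsupp.single_apply] using this
  set c : Fin 4 → ℝ := fun a => bv.repr (w a) a with hc
  -- products equal one
  have k01 : c 0 * c 1 = 1 := by
    have := key2 0 1 2 3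
    rw [Module.Basis.det_apply, Module.Basis.det_apply, detFour, detFour] at this
    simpa [Module.Basis.toMatrix_apply, Finsupp.single_apply, z02, z03, z10, z12, z13, hc] using this
  have k02 : c 0 * c 2 = 1 := by
    have := key2 0 2 1 3
    rw [Module.Basis.det_apply, Module.Basis.det_apply, detFour, detFour] at this
    simpa [Module.Basis.toMatrix_apply, Finsupp.single_apply, z01, z03, z20, z21, z23, hc] using this
  have k03 : c 0 * c 3 = 1 := by
    have := key2 0 3 1 2
    rw [Module.Basis.det_apply, Module.Basis.det_apply, detFour, detFour] at this
    simpa [Module.Basis.toMatrix_apply, Finsupp.single_apply, z01, z02, z30, z31, z32, hc] using this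
  have k12 : c 1 * c 2 = 1 := by
    have := key2 1 2 0 3
    rw [Module.Basis.det_apply, Module.Basis.det_apply, detFour, detFour] at this
    simpa [Module.Basis.toMatrix_apply, Finsupp.single_apply, z10, z13, z20, z21, z23, hc] using this
  -- w a = c a • v a
  have hwa : ∀ a, w a = c a • v a := by
    intro a
    have := (bv.sum_repr (w a)).symm
    rw [Fin.sum_univ_four] at this
    fin_cases a <;>
      simpa [z01, z02, z03, z10, z12, z13, z20, z21, z23, z30, z31, z32, hc, hbv] using this
  have hall : (c 0 = 1 ∧ c 1 = 1 ∧ c 2 = 1 ∧ c 3 = 1) ∨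
      (c 0 = -1 ∧ c 1 = -1 ∧ c 2 = -1 ∧ c 3 = -1) := by
    have hc0 : c 0 ≠ 0 := by intro e; rw [e, zero_mul] at k01; norm_num at k01
    have h12 : c 1 = c 2 := mul_left_cancel₀ hc0 (k01.trans k02.symm)
    have hsq : c 1 * c 1 = 1 := by rw [h12] at k12 ⊢; exact k12
    rcases mul_self_eq_one_iff.mp hsq with h1 | h1
    · left
      refine ⟨?_, h1, ?_, ?_⟩ <;> nlinarith [k01, k02, k03, k12]
    · right
      refine ⟨?_, h1, ?_, ?_⟩ <;> nlinarith [k01, k02, k03, k12]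
  rcases hall with ⟨h0, h1, h2, h3⟩ | ⟨h0, h1, h2, h3⟩
  · left; intro a; rw [hwa a]; fin_cases a <;> simp [h0, h1, h2, h3]
  · right; intro a; rw [hwa a]; fin_cases a <;> simp [h0, h1, h2, h3]
end
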